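/- Let ρ ∈ (0,1]. There exist constants C₀, C₁ > 0 and κ₀ ∈ (0,1), none depending on ρ, such that for every κ ∈ (0,κ₀], every x ∈ D and every u ∈ ℝ, |s_{⌊κ^{−1} u⌋}(x) − S_ρ(x,u)| ≤ C₀ e^{C₁|u|} κ · max{s_{⌊κ^{−1} u⌋}(x), S_ρ(x,u)}. -/

import Mathlib

open Real Filter Set

noncomputable section

/-- `φ₀(κ,ρ,β)`. -/
def phi0 (κ ρ β : ℝ) : ℝ :=
  β * ((1 - κ) * β ^ (2 * ρ) + 2 * (1 + κ * ρ) * β ^ ρ + 1 + κ)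
    / ((1 - κ) * β ^ (2 * ρ) + 2 * (1 - κ * ρ) * β ^ ρ + 1 + κ)

/-- `φ₁(κ,ρ,β)`. -/
def phi1 (κ ρ β : ℝ) : ℝ :=
  β * ((1 + κ) * β ^ (2 * ρ) + 2 * (1 - κ * ρ) * β ^ ρ + 1 - κ)
    / ((1 + κ) * β ^ (2 * ρ) + 2 * (1 + κ * ρ) * β ^ ρ + 1 - κ)

/-- `S` is the (unique) solution of the ODE
`S'(u) = -8ρ S(u)^{1+ρ}/(1+S(u)^ρ)²` with `S(0) = x`, valued in `(0,∞)`. -/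
def IsSsol (ρ x : ℝ) (S : ℝ → ℝ) : Prop :=
  (∀ u : ℝ, 0 < S u) ∧ S 0 = x ∧
    ∀ u : ℝ, HasDerivAt S (-(8 * ρ * S u ^ (1 + ρ)) / (1 + S u ^ ρ) ^ 2) u

set_option maxHeartbeats 2000000

namespace Stmt19Aux

/-- The conserved quantity `F(y) = y^ρ - y^{-ρ} + 2ρ log y`. -/
def Ff (ρ y : ℝ) : ℝ := y ^ ρ - (y ^ ρ)⁻¹ + 2 * ρ * Real.log y

lemma log_lb {x : ℝ} (hx : 0 < x) : 1 - x⁻¹ ≤ Real.log x := by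
  have h := Real.log_le_sub_one_of_pos (inv_pos.2 hx)
  rw [Real.log_inv] at h; linarith

lemma sub_le_log_mul {a b : ℝ} (ha : 0 < a) (hb : 0 < b) (h : b ≤ a) :
    a - b ≤ (Real.log a - Real.log b) * a := by
  have h1 : 1 - (a / b)⁻¹ ≤ Real.log (a / b) := log_lb (div_pos ha hb)
  rw [Real.log_div ha.ne' hb.ne'] at h1
  have h2 : (a / b)⁻¹ = b / a := by rw [inv_div]
  rw [h2] at h1
  have h3 := mul_le_mul_of_nonneg_right h1 ha.le
  have hba : (1 - b / a) * a = a - b := by field_simp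
  linarith [hba ▸ h3]

lemma abs_sub_le_log_mul_max {a b : ℝ} (ha : 0 < a) (hb : 0 < b) :
    |a - b| ≤ |Real.log a - Real.log b| * max a b := by
  rcases le_total b a with h | h
  · have h1 := sub_le_log_mul ha hb h
    have hl : 0 ≤ Real.log a - Real.log b := by
      have := Real.log_le_log hb h; linarith
    rw [abs_of_nonneg (by linarith), abs_of_nonneg hl, max_eq_left h]
    exact h1
  · have h1 := sub_le_log_mul hb ha h
    have hl : 0 ≤ Real.log b - Real.log a := by
      have := Real.log_le_log ha h; linarith
    rw [abs_of_nonpos (by linarith), abs_of_nonpos (by linarith), max_eq_right h]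
    linarith

lemma Ff_ordered {ρ a b : ℝ} (hρ : 0 < ρ) (hb : 0 < b) (h : b ≤ a) :
    2 * ρ * (Real.log a - Real.log b) ≤ Ff ρ a - Ff ρ b := by
  have ha : 0 < a := lt_of_lt_of_le hb h
  have h1 : b ^ ρ ≤ a ^ ρ := Real.rpow_le_rpow hb.le h hρ.le
  have h2 : 0 < b ^ ρ := Real.rpow_pos_of_pos hb ρ
  have h3 : (a ^ ρ)⁻¹ ≤ (b ^ ρ)⁻¹ := by
    apply inv_anti₀ h2 h1
  unfold Ff; nlinarith

lemma log_le_Ff {ρ a b : ℝ} (hρ : 0 < ρ) (ha : 0 < a) (hb : 0 < b) :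
    2 * ρ * |Real.log a - Real.log b| ≤ |Ff ρ a - Ff ρ b| := by
  rcases le_total b a with h | h
  · have h1 := Ff_ordered hρ hb h
    have hl : 0 ≤ Real.log a - Real.log b := by have := Real.log_le_log hb h; linarith
    rw [abs_of_nonneg hl, abs_of_nonneg (by nlinarith)]
    exact h1
  · have h1 := Ff_ordered hρ ha h
    have hl : 0 ≤ Real.log b - Real.log a := by have := Real.log_le_log ha h; linarith
    rw [abs_of_nonpos (by linarith), abs_of_nonpos (by nlinarith)]
    linarith

/-- `Ff ρ ∘ S` decreases linearly (exactly) along the ODE flow. -/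
lemma Ff_deriv {ρ x : ℝ} {S : ℝ → ℝ} (h : IsSsol ρ x S) (u : ℝ) :
    HasDerivAt (fun w => Ff ρ (S w)) (-(8 * ρ ^ 2)) u := by
  obtain ⟨hpos, hS0, hder⟩ := h
  set y := S u with hy
  have hy0 : 0 < y := hpos u
  set v : ℝ := -(8 * ρ * y ^ (1 + ρ)) / (1 + y ^ ρ) ^ 2 with hv
  have hSd : HasDerivAt S v u := hder u
  have hT : 0 < y ^ ρ := Real.rpow_pos_of_pos hy0 ρ
  have h1 : HasDerivAt (fun w => S w ^ ρ) (v * ρ * y ^ (ρ - 1)) u :=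
    hSd.rpow_const (Or.inl hy0.ne')
  have h2 : HasDerivAt (fun w => (S w ^ ρ)⁻¹) (-(v * ρ * y ^ (ρ - 1)) / (y ^ ρ) ^ 2) u :=
    h1.inv hT.ne'
  have h3 : HasDerivAt (fun w => Real.log (S w)) (v / y) u := hSd.log hy0.ne'
  have h4 : HasDerivAt (fun w => Ff ρ (S w))
      (v * ρ * y ^ (ρ - 1) - -(v * ρ * y ^ (ρ - 1)) / (y ^ ρ) ^ 2 + 2 * ρ * (v / y)) u :=
    (h1.sub h2).add (h3.const_mul (2 * ρ))
  have key : v * ρ * y ^ (ρ - 1) - -(v * ρ * y ^ (ρ - 1)) / (y ^ ρ) ^ 2 + 2 * ρ * (v / y)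
      = -(8 * ρ ^ 2) := by
    have e1 : y ^ (ρ - 1) = y ^ ρ / y := by
      rw [Real.rpow_sub hy0, Real.rpow_one]
    have e2 : y ^ (1 + ρ) = y * y ^ ρ := by
      rw [Real.rpow_add hy0, Real.rpow_one]
    have hden : (0:ℝ) < (1 + y ^ ρ) ^ 2 := by positivity
    rw [hv, e1, e2]
    field_simp
    ring
  rw [key] at h4
  exact h4

lemma Ff_S_eq {ρ x : ℝ} {S : ℝ → ℝ} (h : IsSsol ρ x S) (u : ℝ) :
    Ff ρ (S u) = Ff ρ x - 8 * ρ ^ 2 * u := by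
  have hD : ∀ w : ℝ, HasDerivAt (fun w => Ff ρ (S w) + 8 * ρ ^ 2 * w) 0 w := by
    intro w
    have := (Ff_deriv h w).add ((hasDerivAt_id w).const_mul (8 * ρ ^ 2))
    exact this.congr_deriv (by ring)
  have hconst : ∀ w : ℝ, Ff ρ (S w) + 8 * ρ ^ 2 * w = Ff ρ (S 0) + 8 * ρ ^ 2 * 0 := by
    intro w
    exact is_const_of_deriv_eq_zero (fun z => (hD z).differentiableAt)
      (fun z => (hD z).deriv) w 0
  have := hconst u
  rw [h.2.1] at this
  linarith

lemma core {κ ρ t ε₀ ε₁ p q : ℝ} (hρ0 : 0 < ρ) (hρ1 : ρ ≤ 1) (hκ0 : 0 < κ) (hκ : κ ≤ 1/8)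
    (ht : 0 < t)
    (hε₀ : ε₀ = 4*κ*ρ*t / ((1+t)^2 - κ*(t^2+2*ρ*t-1)))
    (hε₁ : ε₁ = 4*κ*ρ*t / ((1+t)^2 + κ*(t^2+2*ρ*t-1)))
    (hp : p = ρ * Real.log (1+ε₀)) (hq : q = -(ρ * Real.log (1-ε₁))) :
    |t*(Real.exp (-q) - Real.exp p) + (Real.exp (-p) - Real.exp q)/t - 2*(p+q) + 8*κ*ρ^2|
      ≤ 100*κ^2*ρ^2 := by
  obtain ⟨A, hA⟩ : ∃ A : ℝ, A = (1+t)^2 := ⟨_, rfl⟩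
  obtain ⟨m, hm⟩ : ∃ m : ℝ, m = t^2+2*ρ*t-1 := ⟨_, rfl⟩
  obtain ⟨D₀, hD₀⟩ : ∃ D : ℝ, D = A - κ*m := ⟨_, rfl⟩
  obtain ⟨D₁, hD₁⟩ : ∃ D : ℝ, D = A + κ*m := ⟨_, rfl⟩
  rw [← hA, ← hm] at hε₀ hε₁
  rw [← hD₀] at hε₀
  rw [← hD₁] at hε₁
  have hA0 : 0 < A := by rw [hA]; positivity
  have hA4 : 4*t ≤ A := by rw [hA]; nlinarith only [sq_nonneg (1-t)]
  have hmA : m ≤ A := by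
    rw [hm, hA]
    nlinarith only [ht, hρ1, mul_le_mul_of_nonneg_right hρ1 ht.le]
  have hmA' : -A ≤ m := by
    rw [hm, hA]
    nlinarith only [ht, hρ0, sq_nonneg t, mul_pos hρ0 ht]
  have hD₀l : 7/8*A ≤ D₀ := by
    rw [hD₀]
    nlinarith only [hmA, hκ0, hκ, hA0, mul_le_mul_of_nonneg_left hmA hκ0.le,
      mul_le_mul_of_nonneg_right hκ hA0.le]
  have hD₁l : 7/8*A ≤ D₁ := by
    rw [hD₁]
    nlinarith only [hmA', hκ0, hκ, hA0, mul_le_mul_of_nonneg_left hmA' hκ0.le,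
      mul_le_mul_of_nonneg_right hκ hA0.le]
  have hD₀0 : 0 < D₀ := by linarith only [hD₀l, hA0]
  have hD₁0 : 0 < D₁ := by linarith only [hD₁l, hA0]
  obtain ⟨W, hW⟩ : ∃ W : ℝ, W = A/t := ⟨_, rfl⟩
  have hW0 : 0 < W := by rw [hW]; positivity
  have hW4 : 4 ≤ W := by rw [hW, le_div_iff₀ ht]; linarith only [hA4]
  have htW : t + 1/t ≤ W := by
    rw [hW, le_div_iff₀ ht]
    have h1 : (t + 1/t)*t = t^2 + 1 := by field_simp
    rw [h1, hA]; nlinarith only [ht]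
  obtain ⟨E, hE⟩ : ∃ E : ℝ, E = (32/7)*κ*ρ/W := ⟨_, rfl⟩
  have hE0 : 0 < E := by rw [hE]; positivity
  have hE14 : E ≤ (8/7)*κ*ρ := by
    have h1 : E ≤ (32/7)*κ*ρ/4 := by
      rw [hE]
      exact div_le_div_of_nonneg_left (by positivity) (by norm_num) hW4
    linarith only [h1]
  have hκρ : κ*ρ ≤ 1/8 := by
    nlinarith only [hκ0, hκ, hρ0, hρ1, mul_le_mul_of_nonneg_left hρ1 hκ0.le]
  have hE17 : E ≤ 1/7 := by nlinarith only [hE14, hκρ]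
  have hε₀0 : 0 < ε₀ := by rw [hε₀]; positivity
  have hε₁0 : 0 < ε₁ := by rw [hε₁]; positivity
  have hEeq : E = 4*κ*ρ*t/((7/8)*A) := by
    rw [hE, hW, eq_div_iff (by positivity)]
    field_simp
    ring
  have hε₀E : ε₀ ≤ E := by
    rw [hε₀, hEeq]
    exact div_le_div_of_nonneg_left (by positivity) (by positivity) hD₀l
  have hε₁E : ε₁ ≤ E := by
    rw [hε₁, hEeq]
    exact div_le_div_of_nonneg_left (by positivity) (by positivity) hD₁l
  have hε₀7 : ε₀ ≤ 1/7 := le_trans hε₀E hE17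
  have hε₁7 : ε₁ ≤ 1/7 := le_trans hε₁E hE17
  have h1ε : (0:ℝ) < 1 - ε₁ := by linarith only [hε₁7]
  -- p bounds
  have hp0 : 0 ≤ p := by
    rw [hp]
    exact mul_nonneg hρ0.le (Real.log_nonneg (by linarith only [hε₀0]))
  have hp1 : p ≤ ρ*ε₀ := by
    have h1 := Real.log_le_sub_one_of_pos (by linarith only [hε₀0] : (0:ℝ) < 1+ε₀)
    have h2 := mul_le_mul_of_nonneg_left h1 hρ0.le
    rw [hp]; linarith only [h2]
  have hp2 : ρ*ε₀ - p ≤ ρ*ε₀^2 := by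
    have hl := log_lb (by linarith only [hε₀0] : (0:ℝ) < 1+ε₀)
    have hx : (1+ε₀)⁻¹ ≤ 1 - ε₀ + ε₀^2 := by
      rw [inv_eq_one_div, div_le_iff₀ (by linarith only [hε₀0] : (0:ℝ) < 1+ε₀)]
      nlinarith only [mul_pos (mul_pos hε₀0 hε₀0) hε₀0]
    have h2 : ε₀ - ε₀^2 ≤ Real.log (1+ε₀) := by linarith only [hl, hx]
    have h3 := mul_le_mul_of_nonneg_left h2 hρ0.le
    rw [hp]; linarith only [h3]
  -- q bounds
  have hq0 : 0 ≤ q := by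
    have h1 := Real.log_nonpos (by linarith only [hε₁7] : 0 ≤ 1-ε₁)
      (by linarith only [hε₁0] : 1-ε₁ ≤ 1)
    have h2 := mul_nonpos_of_nonneg_of_nonpos hρ0.le h1
    rw [hq]; linarith only [h2]
  have hq1 : ρ*ε₁ ≤ q := by
    have h1 := Real.log_le_sub_one_of_pos h1ε
    have h2 := mul_le_mul_of_nonneg_left h1 hρ0.le
    rw [hq]; linarith only [h2]
  have hq2 : q ≤ ρ*(ε₁ + 2*ε₁^2) := by
    have hl := log_lb h1ε
    have hx : (1-ε₁)⁻¹ ≤ 1 + ε₁ + 2*ε₁^2 := by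
      rw [inv_eq_one_div, div_le_iff₀ h1ε]
      nlinarith only [mul_pos (mul_pos hε₁0 hε₁0) hε₁0, hε₁7, hε₁0,
        mul_le_mul_of_nonneg_left hε₁7 (mul_pos hε₁0 hε₁0).le]
    have h2 : -(Real.log (1-ε₁)) ≤ ε₁ + 2*ε₁^2 := by linarith only [hl, hx]
    have h3 := mul_le_mul_of_nonneg_left h2 hρ0.le
    rw [hq]; linarith only [h3]
  have hpE : p ≤ ρ*E := by
    have h1 := mul_le_mul_of_nonneg_left hε₀E hρ0.le
    linarith only [h1, hp1]
  have hqE : q ≤ 2*ρ*E := by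
    have h1 := mul_le_mul_of_nonneg_left hε₁7 hε₁0.le
    have hQ : ε₁ + 2*ε₁^2 ≤ 2*E := by nlinarith only [h1, hε₁E]
    have h3 := mul_le_mul_of_nonneg_left hQ hρ0.le
    have h4 := mul_le_mul_of_nonneg_right hρ1 hE0.le
    nlinarith only [hq2, h3, h4, hρ0, hE0]
  have hρE : ρ*E ≤ 1/7 := by
    have h1 := mul_le_mul_of_nonneg_right hρ1 hE0.le
    linarith only [h1, hE17]
  have hp7 : |p| ≤ 1 := by rw [abs_of_nonneg hp0]; linarith only [hpE, hρE]
  have hq7 : |q| ≤ 1 := by rw [abs_of_nonneg hq0]; linarith only [hqE, hρE]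
  -- exp remainders
  obtain ⟨R₁, hR₁⟩ : ∃ R : ℝ, R = Real.exp (-q) - Real.exp p + (p+q) := ⟨_, rfl⟩
  obtain ⟨R₂, hR₂⟩ : ∃ R : ℝ, R = Real.exp (-p) - Real.exp q + (p+q) := ⟨_, rfl⟩
  have hexp_p := Real.abs_exp_sub_one_sub_id_le hp7
  have hexp_q := Real.abs_exp_sub_one_sub_id_le hq7
  have hexp_np := Real.abs_exp_sub_one_sub_id_le (by rwa [abs_neg] : |(-p)| ≤ 1)
  have hexp_nq := Real.abs_exp_sub_one_sub_id_le (by rwa [abs_neg] : |(-q)| ≤ 1)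
  have hR₁b : |R₁| ≤ p^2 + q^2 := by
    have he : R₁ = -(Real.exp p - 1 - p) + (Real.exp (-q) - 1 - (-q)) := by rw [hR₁]; ring
    rw [he]
    refine le_trans (abs_add_le _ _) ?_
    rw [abs_neg]
    have hnq : (-q)^2 = q^2 := by ring
    rw [hnq] at hexp_nq
    linarith only [hexp_p, hexp_nq, le_abs_self (Real.exp p - 1 - p),
      le_abs_self (Real.exp (-q) - 1 - (-q))]
  have hR₂b : |R₂| ≤ p^2 + q^2 := by
    have he : R₂ = (Real.exp (-p) - 1 - (-p)) + -(Real.exp q - 1 - q) := by rw [hR₂]; ring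
    rw [he]
    refine le_trans (abs_add_le _ _) ?_
    rw [abs_neg]
    have hnp : (-p)^2 = p^2 := by ring
    rw [hnp] at hexp_np
    linarith only [hexp_q, hexp_np]
  -- decomposition identity
  have hid : t*(Real.exp (-q) - Real.exp p) + (Real.exp (-p) - Real.exp q)/t - 2*(p+q) + 8*κ*ρ^2
      = (8*κ*ρ^2 - W*(p+q)) + (t*R₁ + R₂/t) := by
    rw [hR₁, hR₂, hW, hA]; field_simp; ring
  -- main term
  have hsub : W*(ρ*(ε₀+ε₁)) = 8*κ*ρ^2 * (A^2/(D₀*D₁)) := by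
    have hDne0 : A - κ*m ≠ 0 := by rw [← hD₀]; exact hD₀0.ne'
    have hDne1 : A + κ*m ≠ 0 := by rw [← hD₁]; exact hD₁0.ne'
    rw [hε₀, hε₁, hW, hD₀, hD₁]
    field_simp
    ring
  have hAD : A^2 - D₀*D₁ = κ^2*m^2 := by rw [hD₀, hD₁]; ring
  have hm2 : m^2 ≤ A^2 := by
    nlinarith only [mul_nonneg (by linarith only [hmA] : (0:ℝ) ≤ A - m)
      (by linarith only [hmA'] : (0:ℝ) ≤ A + m)]
  have hκ2 : κ^2 ≤ 1/64 := by nlinarith only [hκ0, hκ]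
  have hκm : κ^2*m^2 ≤ (1/64)*m^2 := mul_le_mul_of_nonneg_right hκ2 (sq_nonneg m)
  have hDD : 49/64*A^2 ≤ D₀*D₁ := by
    have h1 : (1/64)*m^2 ≤ (1/64)*A^2 := by linarith only [hm2]
    linarith only [hAD, hκm, h1, sq_nonneg A]
  have hDD0 : 0 < D₀*D₁ := mul_pos hD₀0 hD₁0
  have hratio : A^2/(D₀*D₁) - 1 ≤ 64/49*κ^2 := by
    rw [div_sub_one hDD0.ne', div_le_iff₀ hDD0]
    have h1 : κ^2*m^2 ≤ κ^2*A^2 := mul_le_mul_of_nonneg_left hm2 (sq_nonneg κ)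
    have h2 := mul_le_mul_of_nonneg_left hDD (by positivity : (0:ℝ) ≤ 64/49*κ^2)
    nlinarith only [hAD, h1, h2]
  have hratio0 : 1 ≤ A^2/(D₀*D₁) := by
    rw [le_div_iff₀ hDD0]
    nlinarith only [hAD, sq_nonneg (κ*m)]
  have hmain1 : |W*(ρ*(ε₀+ε₁)) - 8*κ*ρ^2| ≤ 2*κ^2*ρ^2 := by
    rw [hsub]
    have he : 8*κ*ρ^2 * (A^2/(D₀*D₁)) - 8*κ*ρ^2 = 8*κ*ρ^2 * (A^2/(D₀*D₁) - 1) := by ring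
    have h8 : (0:ℝ) ≤ 8*κ*ρ^2 := by positivity
    rw [he, abs_of_nonneg (mul_nonneg h8 (by linarith only [hratio0]))]
    have h1 := mul_le_mul_of_nonneg_left hratio h8
    have h2 : κ^2*κ ≤ κ^2*(1/8) := mul_le_mul_of_nonneg_left hκ (sq_nonneg κ)
    have h3 := mul_le_mul_of_nonneg_right h2 (sq_nonneg ρ)
    nlinarith only [h1, h3]
  have hE2W : E^2*W = ((32/7)*κ*ρ)^2/W := by
    rw [hE]; field_simp
  have hE2Wb : E^2*W ≤ ((32/7)*κ*ρ)^2/4 := by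
    rw [hE2W]
    exact div_le_div_of_nonneg_left (by positivity) (by norm_num) hW4
  have hρ2 : ρ^2 ≤ 1 := by nlinarith only [hρ0, hρ1]
  have hmain2 : |W*(p+q) - W*(ρ*(ε₀+ε₁))| ≤ 16*κ^2*ρ^2 := by
    have hεE0 : ε₀*ε₀ ≤ E*E := mul_self_le_mul_self hε₀0.le hε₀E
    have hεE1 : ε₁*ε₁ ≤ E*E := mul_self_le_mul_self hε₁0.le hε₁E
    have hεE0' := mul_le_mul_of_nonneg_left hεE0 hρ0.le
    have hεE1' := mul_le_mul_of_nonneg_left hεE1 hρ0.le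
    have h1 : |p + q - ρ*(ε₀+ε₁)| ≤ 3*ρ*E^2 := by
      rw [abs_le]
      constructor
      · nlinarith only [hp1, hq1, hp2, hεE0', hεE1',
          mul_nonneg hρ0.le (mul_nonneg hε₁0.le hε₁0.le)]
      · nlinarith only [hp1, hq2, hq1, hεE0', hεE1',
          mul_nonneg hρ0.le (mul_nonneg hε₀0.le hε₀0.le)]
    have h2 : W*(p+q) - W*(ρ*(ε₀+ε₁)) = W*((p+q) - ρ*(ε₀+ε₁)) := by ring
    rw [h2, abs_mul, abs_of_pos hW0]
    have h3 := mul_le_mul_of_nonneg_left h1 hW0.le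
    have h5 := mul_le_mul_of_nonneg_left hE2Wb (by positivity : (0:ℝ) ≤ 3*ρ)
    have h6 : κ^2*(ρ^2*ρ) ≤ κ^2*(ρ^2*1) := by
      have := mul_le_mul_of_nonneg_left hρ1 (sq_nonneg ρ)
      exact mul_le_mul_of_nonneg_left this (sq_nonneg κ)
    nlinarith only [h3, h5, h6]
  -- remainder term
  have hrem : |t*R₁ + R₂/t| ≤ 27*κ^2*ρ^2 := by
    have ha1 : |t*R₁| = t*|R₁| := by rw [abs_mul, abs_of_pos ht]
    have ha2 : |R₂/t| = |R₂|/t := by rw [abs_div, abs_of_pos ht]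
    have hb1 : t*|R₁| ≤ t*(p^2+q^2) := mul_le_mul_of_nonneg_left hR₁b ht.le
    have hb2 : |R₂|/t ≤ (p^2+q^2)/t := by
      gcongr
    have hc : t*(p^2+q^2) + (p^2+q^2)/t = (p^2+q^2)*(t + 1/t) := by field_simp
    have hpq2 : p^2+q^2 ≤ 5*ρ^2*E^2 := by
      have h1 : p*p ≤ (ρ*E)*(ρ*E) := mul_self_le_mul_self hp0 hpE
      have h2 : q*q ≤ (2*ρ*E)*(2*ρ*E) := mul_self_le_mul_self hq0 hqE
      nlinarith only [h1, h2]
    have h3 : (p^2+q^2)*(t+1/t) ≤ (5*ρ^2*E^2)*W := by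
      have ht' : (0:ℝ) < t + 1/t := by positivity
      have := mul_le_mul hpq2 htW ht'.le (by positivity : (0:ℝ) ≤ 5*ρ^2*E^2)
      linarith only [this]
    have h5 := mul_le_mul_of_nonneg_left hE2Wb (by positivity : (0:ℝ) ≤ 5*ρ^2)
    have h6 : κ^2*(ρ^2*ρ^2) ≤ κ^2*(ρ^2*1) := by
      have := mul_le_mul_of_nonneg_left hρ2 (sq_nonneg ρ)
      exact mul_le_mul_of_nonneg_left this (sq_nonneg κ)
    calc |t*R₁ + R₂/t| ≤ |t*R₁| + |R₂/t| := abs_add_le _ _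
      _ ≤ t*(p^2+q^2) + (p^2+q^2)/t := by
          rw [ha1, ha2]; exact add_le_add hb1 hb2
      _ = (p^2+q^2)*(t + 1/t) := hc
      _ ≤ (5*ρ^2*E^2)*W := h3
      _ ≤ 27*κ^2*ρ^2 := by nlinarith only [h5, h6]
  -- assembly
  rw [hid]
  have hfin : |8*κ*ρ^2 - W*(p+q)| ≤ 18*κ^2*ρ^2 := by
    have he : 8*κ*ρ^2 - W*(p+q)
        = (W*(ρ*(ε₀+ε₁)) - W*(p+q)) + (8*κ*ρ^2 - W*(ρ*(ε₀+ε₁))) := by ring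
    rw [he]
    refine le_trans (abs_add_le _ _) ?_
    have h1 := hmain2
    rw [abs_sub_comm] at h1
    have h2 := hmain1
    rw [abs_sub_comm] at h2
    linarith only [h1, h2]
  refine le_trans (abs_add_le _ _) ?_
  have hpos : (0:ℝ) ≤ κ^2*ρ^2 := by positivity
  linarith only [hfin, hrem, hpos]

variable {κ ρ β : ℝ}

lemma rpow_two_mul (hβ : 0 < β) : β ^ (2 * ρ) = (β ^ ρ)^2 := by
  rw [two_mul, Real.rpow_add hβ, sq]

lemma Dpos_aux (hρ0 : 0 < ρ) (hρ1 : ρ ≤ 1) (hκ0 : 0 < κ) (hκ : κ ≤ 1/8) (hβ : 0 < β) :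
    7/8*(1 + β ^ ρ)^2 ≤ (1+β^ρ)^2 - κ*((β^ρ)^2+2*ρ*(β^ρ)-1) ∧
    7/8*(1 + β ^ ρ)^2 ≤ (1+β^ρ)^2 + κ*((β^ρ)^2+2*ρ*(β^ρ)-1) := by
  have ht : 0 < β ^ ρ := Real.rpow_pos_of_pos hβ ρ
  obtain ⟨t, htt⟩ : ∃ t : ℝ, t = β ^ ρ := ⟨_, rfl⟩
  rw [← htt] at ht ⊢
  have hmA : (t^2+2*ρ*t-1) ≤ (1+t)^2 := by
    nlinarith only [ht, hρ1, mul_le_mul_of_nonneg_right hρ1 ht.le]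
  have hmA' : -(1+t)^2 ≤ (t^2+2*ρ*t-1) := by
    nlinarith only [ht, hρ0, sq_nonneg t, mul_pos hρ0 ht]
  have hA0 : (0:ℝ) < (1+t)^2 := by positivity
  constructor
  · nlinarith only [hmA, hκ0, hκ, hA0, mul_le_mul_of_nonneg_left hmA hκ0.le,
      mul_le_mul_of_nonneg_right hκ hA0.le]
  · nlinarith only [hmA', hκ0, hκ, hA0, mul_le_mul_of_nonneg_left hmA' hκ0.le,
      mul_le_mul_of_nonneg_right hκ hA0.le]

lemma phi0_repr (hρ0 : 0 < ρ) (hρ1 : ρ ≤ 1) (hκ0 : 0 < κ) (hκ : κ ≤ 1/8) (hβ : 0 < β) :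
    phi0 κ ρ β = β * (1 + 4*κ*ρ*(β^ρ) / ((1+β^ρ)^2 - κ*((β^ρ)^2+2*ρ*(β^ρ)-1))) := by
  have ht : 0 < β ^ ρ := Real.rpow_pos_of_pos hβ ρ
  have hD := (Dpos_aux hρ0 hρ1 hκ0 hκ hβ).1
  have hA0 : (0:ℝ) < (1+β^ρ)^2 := by positivity
  have hD0 : 0 < (1+β^ρ)^2 - κ*((β^ρ)^2+2*ρ*(β^ρ)-1) := by linarith
  have hN : (1 - κ) * β ^ (2*ρ) + 2 * (1 + κ * ρ) * β ^ ρ + 1 + κ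
      = ((1+β^ρ)^2 - κ*((β^ρ)^2+2*ρ*(β^ρ)-1)) + 4*κ*ρ*(β^ρ) := by
    rw [rpow_two_mul hβ]; ring
  have hDe : (1 - κ) * β ^ (2*ρ) + 2 * (1 - κ * ρ) * β ^ ρ + 1 + κ
      = ((1+β^ρ)^2 - κ*((β^ρ)^2+2*ρ*(β^ρ)-1)) := by
    rw [rpow_two_mul hβ]; ring
  unfold phi0
  rw [hN, hDe]
  field_simp
  rw [add_div, div_self (by intro h; linarith)]

lemma phi1_repr (hρ0 : 0 < ρ) (hρ1 : ρ ≤ 1) (hκ0 : 0 < κ) (hκ : κ ≤ 1/8) (hβ : 0 < β) :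
    phi1 κ ρ β = β * (1 - 4*κ*ρ*(β^ρ) / ((1+β^ρ)^2 + κ*((β^ρ)^2+2*ρ*(β^ρ)-1))) := by
  have ht : 0 < β ^ ρ := Real.rpow_pos_of_pos hβ ρ
  have hD := (Dpos_aux hρ0 hρ1 hκ0 hκ hβ).2
  have hA0 : (0:ℝ) < (1+β^ρ)^2 := by positivity
  have hD0 : 0 < (1+β^ρ)^2 + κ*((β^ρ)^2+2*ρ*(β^ρ)-1) := by linarith
  have hN : (1 + κ) * β ^ (2*ρ) + 2 * (1 - κ * ρ) * β ^ ρ + 1 - κ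
      = ((1+β^ρ)^2 + κ*((β^ρ)^2+2*ρ*(β^ρ)-1)) - 4*κ*ρ*(β^ρ) := by
    rw [rpow_two_mul hβ]; ring
  have hDe : (1 + κ) * β ^ (2*ρ) + 2 * (1 + κ * ρ) * β ^ ρ + 1 - κ
      = ((1+β^ρ)^2 + κ*((β^ρ)^2+2*ρ*(β^ρ)-1)) := by
    rw [rpow_two_mul hβ]; ring
  unfold phi1
  rw [show β * ((1 + κ) * β ^ (2 * ρ) + 2 * (1 - κ * ρ) * β ^ ρ + 1 - κ)
      = β * (((1+β^ρ)^2 + κ*((β^ρ)^2+2*ρ*(β^ρ)-1)) - 4*κ*ρ*(β^ρ)) by rw [← hN],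
    show (1 + κ) * β ^ (2 * ρ) + 2 * (1 + κ * ρ) * β ^ ρ + 1 - κ
      = ((1+β^ρ)^2 + κ*((β^ρ)^2+2*ρ*(β^ρ)-1)) from hDe]
  field_simp
  rw [sub_div, div_self (by intro h; linarith)]

lemma eps_bounds (hρ0 : 0 < ρ) (hρ1 : ρ ≤ 1) (hκ0 : 0 < κ) (hκ : κ ≤ 1/8) (hβ : 0 < β) :
    (0 < 4*κ*ρ*(β^ρ) / ((1+β^ρ)^2 - κ*((β^ρ)^2+2*ρ*(β^ρ)-1)) ∧
      4*κ*ρ*(β^ρ) / ((1+β^ρ)^2 - κ*((β^ρ)^2+2*ρ*(β^ρ)-1)) ≤ 1/7) ∧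
    (0 < 4*κ*ρ*(β^ρ) / ((1+β^ρ)^2 + κ*((β^ρ)^2+2*ρ*(β^ρ)-1)) ∧
      4*κ*ρ*(β^ρ) / ((1+β^ρ)^2 + κ*((β^ρ)^2+2*ρ*(β^ρ)-1)) ≤ 1/7) := by
  have ht : 0 < β ^ ρ := Real.rpow_pos_of_pos hβ ρ
  have hD := Dpos_aux hρ0 hρ1 hκ0 hκ hβ
  obtain ⟨t, htt⟩ : ∃ t : ℝ, t = β ^ ρ := ⟨_, rfl⟩
  rw [← htt] at ht hD ⊢
  obtain ⟨hD0, hD1⟩ := hD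
  have hA0 : (0:ℝ) < (1+t)^2 := by positivity
  have hD0' : 0 < (1+t)^2 - κ*(t^2+2*ρ*t-1) := by linarith
  have hD1' : 0 < (1+t)^2 + κ*(t^2+2*ρ*t-1) := by linarith
  have hκρ : κ*ρ ≤ 1/8 := by
    nlinarith only [hκ0, hκ, hρ0, hρ1, mul_le_mul_of_nonneg_left hρ1 hκ0.le]
  have hwt : 4*t ≤ (1+t)^2 := by nlinarith only [sq_nonneg (1-t)]
  have hnum : 4*κ*ρ*t ≤ 1/7*(7/8*(1+t)^2) := by
    have h1 : 4*(κ*ρ)*t ≤ 4*(1/8)*t := by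
      have := mul_le_mul_of_nonneg_right hκρ ht.le
      nlinarith only [this]
    nlinarith only [h1, hwt]
  constructor
  · refine ⟨by positivity, ?_⟩
    rw [div_le_iff₀ hD0']
    nlinarith only [hnum, hD0]
  · refine ⟨by positivity, ?_⟩
    rw [div_le_iff₀ hD1']
    nlinarith only [hnum, hD1]

lemma phi0_between (hρ0 : 0 < ρ) (hρ1 : ρ ≤ 1) (hκ0 : 0 < κ) (hκ : κ ≤ 1/8) (hβ : 0 < β) :
    β ≤ phi0 κ ρ β ∧ phi0 κ ρ β ≤ 2*β := by
  rw [phi0_repr hρ0 hρ1 hκ0 hκ hβ]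
  obtain ⟨⟨h0, h7⟩, -⟩ := eps_bounds hρ0 hρ1 hκ0 hκ hβ
  constructor
  · nlinarith only [h0, hβ]
  · nlinarith only [h7, hβ]

lemma phi0_pos (hρ0 : 0 < ρ) (hρ1 : ρ ≤ 1) (hκ0 : 0 < κ) (hκ : κ ≤ 1/8) (hβ : 0 < β) :
    0 < phi0 κ ρ β :=
  lt_of_lt_of_le hβ (phi0_between hρ0 hρ1 hκ0 hκ hβ).1

lemma phi1_pos (hρ0 : 0 < ρ) (hρ1 : ρ ≤ 1) (hκ0 : 0 < κ) (hκ : κ ≤ 1/8) (hβ : 0 < β) :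
    0 < phi1 κ ρ β := by
  rw [phi1_repr hρ0 hρ1 hκ0 hκ hβ]
  obtain ⟨-, ⟨h0, h7⟩⟩ := eps_bounds hρ0 hρ1 hκ0 hκ hβ
  nlinarith only [h7, hβ]

lemma Ff_mul_pos {c : ℝ} (hβ : 0 < β) (hc : 0 < c) :
    Ff ρ (β*c) = (β^ρ)*Real.exp (ρ*Real.log c) - ((β^ρ)*Real.exp (ρ*Real.log c))⁻¹
      + 2*ρ*(Real.log β + Real.log c) := by
  unfold Ff
  rw [Real.mul_rpow hβ.le hc.le, Real.log_mul hβ.ne' hc.ne', Real.rpow_def_of_pos hc,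
    mul_comm (Real.log c) ρ]

lemma Ff_phi_diff (hρ0 : 0 < ρ) (hρ1 : ρ ≤ 1) (hκ0 : 0 < κ) (hκ : κ ≤ 1/8) (hβ : 0 < β) :
    |Ff ρ (phi1 κ ρ β) - Ff ρ (phi0 κ ρ β) + 8*κ*ρ^2| ≤ 100*κ^2*ρ^2 := by
  have ht : 0 < β ^ ρ := Real.rpow_pos_of_pos hβ ρ
  obtain ⟨⟨he00, he07⟩, ⟨he10, he17⟩⟩ := eps_bounds hρ0 hρ1 hκ0 hκ hβ
  obtain ⟨ε₀, hε₀⟩ : ∃ e : ℝ, e = 4*κ*ρ*(β^ρ) / ((1+β^ρ)^2 - κ*((β^ρ)^2+2*ρ*(β^ρ)-1)) := ⟨_, rfl⟩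
  obtain ⟨ε₁, hε₁⟩ : ∃ e : ℝ, e = 4*κ*ρ*(β^ρ) / ((1+β^ρ)^2 + κ*((β^ρ)^2+2*ρ*(β^ρ)-1)) := ⟨_, rfl⟩
  rw [← hε₀] at he00 he07
  rw [← hε₁] at he10 he17
  have h0 : phi0 κ ρ β = β * (1 + ε₀) := by rw [phi0_repr hρ0 hρ1 hκ0 hκ hβ, hε₀]
  have h1 : phi1 κ ρ β = β * (1 - ε₁) := by rw [phi1_repr hρ0 hρ1 hκ0 hκ hβ, hε₁]
  obtain ⟨p, hp⟩ : ∃ p : ℝ, p = ρ * Real.log (1+ε₀) := ⟨_, rfl⟩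
  obtain ⟨q, hq⟩ : ∃ q : ℝ, q = -(ρ * Real.log (1-ε₁)) := ⟨_, rfl⟩
  have hc0 : (0:ℝ) < 1 + ε₀ := by linarith
  have hc1 : (0:ℝ) < 1 - ε₁ := by linarith
  have hF0 : Ff ρ (phi0 κ ρ β) = (β^ρ)*Real.exp p - ((β^ρ)*Real.exp p)⁻¹
      + 2*ρ*(Real.log β + Real.log (1+ε₀)) := by
    rw [h0, Ff_mul_pos hβ hc0, hp]
  have hF1 : Ff ρ (phi1 κ ρ β) = (β^ρ)*Real.exp (-q) - ((β^ρ)*Real.exp (-q))⁻¹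
      + 2*ρ*(Real.log β + Real.log (1-ε₁)) := by
    rw [h1, Ff_mul_pos hβ hc1, hq, neg_neg]
  have hdiff : Ff ρ (phi1 κ ρ β) - Ff ρ (phi0 κ ρ β)
      = (β^ρ)*(Real.exp (-q) - Real.exp p) + (Real.exp (-p) - Real.exp q)/(β^ρ) - 2*(p+q) := by
    rw [hF0, hF1]
    have e1 : Real.exp (-q) = (Real.exp q)⁻¹ := Real.exp_neg q
    have e2 : Real.exp (-p) = (Real.exp p)⁻¹ := Real.exp_neg p
    have e3 : ρ * Real.log (1-ε₁) = -q := by rw [hq]; ring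
    have e4 : ρ * Real.log (1+ε₀) = p := by rw [hp]
    have hlog1 : 2*ρ*(Real.log β + Real.log (1-ε₁)) = 2*ρ*Real.log β - 2*q := by
      have : 2*ρ*(Real.log β + Real.log (1-ε₁)) = 2*ρ*Real.log β + 2*(ρ*Real.log (1-ε₁)) := by ring
      rw [this, e3]; ring
    have hlog0 : 2*ρ*(Real.log β + Real.log (1+ε₀)) = 2*ρ*Real.log β + 2*p := by
      have : 2*ρ*(Real.log β + Real.log (1+ε₀)) = 2*ρ*Real.log β + 2*(ρ*Real.log (1+ε₀)) := by ring
      rw [this, e4]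
    rw [hlog1, hlog0, e1, e2]
    have hexpq := Real.exp_ne_zero q
    have hexpp := Real.exp_ne_zero p
    field_simp
    ring
  rw [hdiff]
  exact core hρ0 hρ1 hκ0 hκ ht hε₀ hε₁ hp hq

lemma phi0_contOn (hρ0 : 0 < ρ) (hρ1 : ρ ≤ 1) (hκ0 : 0 < κ) (hκ : κ ≤ 1/8)
    {a b : ℝ} (ha : 0 < a) : ContinuousOn (phi0 κ ρ) (Set.Icc a b) := by
  intro β hβmem
  have hβ0 : 0 < β := lt_of_lt_of_le ha hβmem.1
  apply ContinuousAt.continuousWithinAt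
  have h2 : ContinuousAt (fun x : ℝ => x ^ (2*ρ)) β :=
    Real.continuousAt_rpow_const β (2*ρ) (Or.inl hβ0.ne')
  have h1 : ContinuousAt (fun x : ℝ => x ^ ρ) β :=
    Real.continuousAt_rpow_const β ρ (Or.inl hβ0.ne')
  have hden : ContinuousAt
      (fun x : ℝ => (1 - κ) * x ^ (2*ρ) + 2 * (1 - κ * ρ) * x ^ ρ + 1 + κ) β :=
    (((continuousAt_const.mul h2).add (continuousAt_const.mul h1)).add
      continuousAt_const).add continuousAt_const
  have hnum : ContinuousAt
      (fun x : ℝ => x * ((1 - κ) * x ^ (2*ρ) + 2 * (1 + κ * ρ) * x ^ ρ + 1 + κ)) β :=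
    continuousAt_id.mul ((((continuousAt_const.mul h2).add
      (continuousAt_const.mul h1)).add continuousAt_const).add continuousAt_const)
  have hκρ : κ*ρ ≤ 1/8 := by
    nlinarith only [hκ0, hκ, hρ0, hρ1, mul_le_mul_of_nonneg_left hρ1 hκ0.le]
  have hdenne : (1 - κ) * β ^ (2*ρ) + 2 * (1 - κ * ρ) * β ^ ρ + 1 + κ ≠ 0 := by
    have t1 : 0 < β ^ (2*ρ) := Real.rpow_pos_of_pos hβ0 _
    have t2 : 0 < β ^ ρ := Real.rpow_pos_of_pos hβ0 _
    have g1 : 0 ≤ (1-κ) * β ^ (2*ρ) := mul_nonneg (by linarith) t1.le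
    have g2 : 0 ≤ 2*(1 - κ*ρ) * β ^ ρ := mul_nonneg (by linarith) t2.le
    have : 0 < (1 - κ) * β ^ (2*ρ) + 2 * (1 - κ * ρ) * β ^ ρ + 1 + κ := by
      nlinarith only [g1, g2, hκ0]
    exact this.ne'
  exact hnum.div hden hdenne

lemma phi0_surj (hρ0 : 0 < ρ) (hρ1 : ρ ≤ 1) (hκ0 : 0 < κ) (hκ : κ ≤ 1/8)
    (hbetween : ∀ β : ℝ, 0 < β → β ≤ phi0 κ ρ β ∧ phi0 κ ρ β ≤ 2*β)
    {y : ℝ} (hy : 0 < y) : ∃ β : ℝ, 0 < β ∧ phi0 κ ρ β = y := by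
  have h2 : (0:ℝ) < y/2 := by linarith
  have hcont := phi0_contOn hρ0 hρ1 hκ0 hκ (b := y) h2
  have hsub := intermediate_value_Icc (by linarith : y/2 ≤ y) hcont
  have hy_mem : y ∈ Set.Icc (phi0 κ ρ (y/2)) (phi0 κ ρ y) := by
    constructor
    · have := (hbetween (y/2) h2).2; linarith
    · exact (hbetween y hy).1
  obtain ⟨β, hβmem, hβeq⟩ := hsub hy_mem
  exact ⟨β, lt_of_lt_of_le h2 hβmem.1, hβeq⟩

lemma iter_bound {κ ρ : ℝ} (hρ0 : 0 < ρ) (hρ1 : ρ ≤ 1) (hκ0 : 0 < κ) (hκ : κ ≤ 1/8)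
    (s : ℝ → ℝ) (hs : ∀ β : ℝ, 0 < β → s (phi0 κ ρ β) = phi1 κ ρ β)
    (siter : ℤ → ℝ → ℝ)
    (hz : ∀ x : ℝ, 0 < x → siter 0 x = x)
    (hpos : ∀ (i : ℤ) (x : ℝ), 0 < x → 0 < siter i x)
    (hrec : ∀ (i : ℤ) (x : ℝ), 0 < x → siter (i + 1) x = s (siter i x))
    {x : ℝ} (hx : 0 < x) :
    ∀ j : ℤ, |Ff ρ (siter j x) - Ff ρ x + 8*κ*ρ^2*(j:ℝ)| ≤ 100*(κ^2*ρ^2)*|(j:ℝ)| := by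
  have hstep : ∀ j : ℤ, |Ff ρ (siter (j+1) x) - Ff ρ (siter j x) + 8*κ*ρ^2| ≤ 100*(κ^2*ρ^2) := by
    intro j
    obtain ⟨β, hβ0, hβeq⟩ := phi0_surj hρ0 hρ1 hκ0 hκ
      (fun β hβ => phi0_between hρ0 hρ1 hκ0 hκ hβ) (hpos j x hx)
    have h1 : siter (j+1) x = phi1 κ ρ β := by rw [hrec j x hx, ← hβeq, hs β hβ0]
    rw [h1, ← hβeq]
    have := Ff_phi_diff hρ0 hρ1 hκ0 hκ hβ0
    linarith [this]
  intro j
  induction j using Int.induction_on with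
  | zero => rw [hz x hx]; simp
  | succ i ih =>
    have hst := hstep i
    have hi0 : (0:ℝ) ≤ ((i:ℤ):ℝ) := by positivity
    rw [abs_of_nonneg hi0] at ih
    have hcast : (((i:ℤ)+1 : ℤ):ℝ) = ((i:ℤ):ℝ) + 1 := by push_cast; ring
    rw [hcast, abs_of_nonneg (by linarith : (0:ℝ) ≤ ((i:ℤ):ℝ)+1)]
    have hd : Ff ρ (siter ((i:ℤ)+1) x) - Ff ρ x + 8*κ*ρ^2*(((i:ℤ):ℝ)+1)
        = (Ff ρ (siter ((i:ℤ)+1) x) - Ff ρ (siter (i:ℤ) x) + 8*κ*ρ^2)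
          + (Ff ρ (siter (i:ℤ) x) - Ff ρ x + 8*κ*ρ^2*((i:ℤ):ℝ)) := by ring
    rw [hd]
    refine le_trans (abs_add_le _ _) ?_
    linarith [hst, ih]
  | pred i ih =>
    have hst := hstep (-(i:ℤ)-1)
    have hidx : (-(i:ℤ)-1) + 1 = -(i:ℤ) := by ring
    rw [hidx] at hst
    have hi0 : (0:ℝ) ≤ ((i:ℤ):ℝ) := by positivity
    have hcast1 : ((-(i:ℤ) : ℤ):ℝ) = -((i:ℤ):ℝ) := by push_cast; ring
    have hcast2 : ((-(i:ℤ)-1 : ℤ):ℝ) = -((i:ℤ):ℝ)-1 := by push_cast; ring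
    rw [hcast1, abs_neg, abs_of_nonneg hi0] at ih
    rw [hcast2, show -((i:ℤ):ℝ)-1 = -(((i:ℤ):ℝ)+1) by ring, abs_neg,
      abs_of_nonneg (by linarith : (0:ℝ) ≤ ((i:ℤ):ℝ)+1)]
    have hd : Ff ρ (siter (-(i:ℤ)-1) x) - Ff ρ x + 8*κ*ρ^2*(-(((i:ℤ):ℝ)+1))
        = (Ff ρ (siter (-(i:ℤ)) x) - Ff ρ x + 8*κ*ρ^2*(-((i:ℤ):ℝ)))
          - (Ff ρ (siter (-(i:ℤ)) x) - Ff ρ (siter (-(i:ℤ)-1) x) + 8*κ*ρ^2) := by ring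
    rw [hd]
    refine le_trans (abs_sub _ _) ?_
    have hih : |Ff ρ (siter (-(i:ℤ)) x) - Ff ρ x + 8*κ*ρ^2*(-((i:ℤ):ℝ))| ≤ 100*(κ^2*ρ^2)*((i:ℤ):ℝ) := by
      have : 8*κ*ρ^2*(-((i:ℤ):ℝ)) = -(8*κ*ρ^2*((i:ℤ):ℝ)) := by ring
      rw [this]
      convert ih using 2
      ring
    linarith [hst, hih]

end Stmt19Aux

open Stmt19Aux in
theorem stmt19 :
    ∃ C₀ C₁ κ₀ : ℝ, 0 < C₀ ∧ 0 < C₁ ∧ κ₀ ∈ Set.Ioo (0:ℝ) 1 ∧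
      ∀ ρ ∈ Set.Ioc (0:ℝ) 1, ∀ κ ∈ Set.Ioc (0:ℝ) κ₀,
        ∀ s : ℝ → ℝ, (∀ β : ℝ, 0 < β → s (phi0 κ ρ β) = phi1 κ ρ β) →
        ∀ siter : ℤ → ℝ → ℝ,
          (∀ x : ℝ, 0 < x → siter 0 x = x) →
          (∀ (i : ℤ) (x : ℝ), 0 < x → 0 < siter i x) →
          (∀ (i : ℤ) (x : ℝ), 0 < x → siter (i + 1) x = s (siter i x)) →
        ∀ x ∈ Set.Ioc ((2 - κ * ρ) / (2 + κ * ρ)) ((2 + κ * ρ) / (2 - κ * ρ)),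
        ∀ S : ℝ → ℝ, IsSsol ρ x S →
        ∀ u : ℝ,
          |siter ⌊κ⁻¹ * u⌋ x - S u|
            ≤ C₀ * Real.exp (C₁ * |u|) * κ * max (siter ⌊κ⁻¹ * u⌋ x) (S u) := by
  refine ⟨100, 1, 1/8, by norm_num, by norm_num, ⟨by norm_num, by norm_num⟩, ?_⟩
  rintro ρ ⟨hρ0, hρ1⟩ κ ⟨hκ0, hκ8⟩ s hs siter hz hpos hrec x hxmem S hS u
  have hκρ : κ*ρ ≤ 1/8 := by
    nlinarith only [hκ0, hκ8, hρ0, hρ1, mul_le_mul_of_nonneg_left hρ1 hκ0.le]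
  have hκρ0 : 0 < κ*ρ := mul_pos hκ0 hρ0
  have hx0 : 0 < x := by
    have h1 : 0 < (2 - κ * ρ) / (2 + κ * ρ) := by
      apply div_pos <;> linarith
    exact lt_trans h1 hxmem.1
  set i : ℤ := ⌊κ⁻¹ * u⌋ with hi
  have hfl : (i:ℝ) ≤ κ⁻¹*u := Int.floor_le _
  have hfu : κ⁻¹*u < (i:ℝ)+1 := Int.lt_floor_add_one _
  have hkinv : κ*(κ⁻¹*u) = u := by field_simp
  have hui1 : κ*(i:ℝ) ≤ u := by
    have := mul_le_mul_of_nonneg_left hfl hκ0.le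
    rwa [hkinv] at this
  have hui2 : u < κ*(i:ℝ) + κ := by
    have := mul_lt_mul_of_pos_left hfu hκ0
    rw [hkinv] at this
    linarith [this]
  have hiter := iter_bound hρ0 hρ1 hκ0 hκ8 s hs siter hz hpos hrec hx0 i
  have hSu := Ff_S_eq hS u
  have hsit : 0 < siter i x := hpos i x hx0
  have hSpos : 0 < S u := hS.1 u
  -- |u - κ i| ≤ κ  and κ|i| ≤ |u| + κ
  have habs1 : |u - κ*(i:ℝ)| ≤ κ := by
    rw [abs_le]; constructor <;> linarith
  have habs2 : κ*|(i:ℝ)| ≤ |u| + κ := by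
    have h1 : |κ*(i:ℝ)| ≤ |u| + κ := by
      rw [abs_le]; constructor
      · have := neg_abs_le u; linarith
      · have := le_abs_self u; linarith
    rw [abs_mul, abs_of_pos hκ0] at h1
    exact h1
  -- F-difference bound
  have hFd : |Ff ρ (siter i x) - Ff ρ (S u)| ≤ 8*ρ^2*κ + 100*(κ^2*ρ^2)*|(i:ℝ)| := by
    have hd : Ff ρ (siter i x) - Ff ρ (S u)
        = (Ff ρ (siter i x) - Ff ρ x + 8*κ*ρ^2*(i:ℝ)) + 8*ρ^2*(u - κ*(i:ℝ)) := by
      rw [hSu]; ring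
    rw [hd]
    refine le_trans (abs_add_le _ _) ?_
    have h2 : |8*ρ^2*(u - κ*(i:ℝ))| ≤ 8*ρ^2*κ := by
      rw [abs_mul, abs_of_nonneg (by positivity : (0:ℝ) ≤ 8*ρ^2)]
      have := mul_le_mul_of_nonneg_left habs1 (by positivity : (0:ℝ) ≤ 8*ρ^2)
      linarith [this]
    linarith [hiter, h2]
  -- convert to log bound
  have hlog := log_le_Ff hρ0 hsit hSpos
  have hexp1 : |u| + 1 ≤ Real.exp |u| := by
    have := Real.add_one_le_exp |u|
    linarith
  have hL : |Real.log (siter i x) - Real.log (S u)| ≤ 100 * Real.exp (1*|u|) * κ := by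
    rw [one_mul]
    have hB : 8*ρ^2*κ + 100*(κ^2*ρ^2)*|(i:ℝ)| ≤ 2*ρ*(100 * Real.exp |u| * κ) := by
      have h1 : 100*(κ^2*ρ^2)*|(i:ℝ)| = 100*(κ*ρ^2)*(κ*|(i:ℝ)|) := by ring
      have h2 : 100*(κ*ρ^2)*(κ*|(i:ℝ)|) ≤ 100*(κ*ρ^2)*(|u| + κ) :=
        mul_le_mul_of_nonneg_left habs2 (by positivity)
      have h3 : ρ^2 ≤ ρ := by nlinarith only [hρ0, hρ1]
      have h4 : κ*ρ^2*|u| ≤ κ*ρ*|u| := by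
        have := mul_le_mul_of_nonneg_left h3 hκ0.le
        exact mul_le_mul_of_nonneg_right this (abs_nonneg u)
      have h5 : κ*ρ^2*κ ≤ κ*ρ*(1/8) := by
        have h6 : κ*ρ^2 ≤ κ*ρ := mul_le_mul_of_nonneg_left h3 hκ0.le
        have h7 : κ*ρ^2*κ ≤ κ*ρ*κ := mul_le_mul_of_nonneg_right h6 hκ0.le
        have h8 : κ*ρ*κ ≤ κ*ρ*(1/8) := mul_le_mul_of_nonneg_left hκ8 hκρ0.le
        linarith
      have h9 : ρ^2*κ ≤ ρ*κ := mul_le_mul_of_nonneg_right h3 hκ0.le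
      have h10 : 0 ≤ 200*(ρ*κ)*(Real.exp |u| - 1 - |u|) := by
        apply mul_nonneg (by positivity)
        linarith [hexp1]
      linarith only [h1, h2, h4, h5, h9, h10, hκρ0, mul_nonneg hκρ0.le (abs_nonneg u)]
    have h2ρ : (0:ℝ) < 2*ρ := by linarith
    have := le_trans hlog (le_trans hFd hB)
    exact le_of_mul_le_mul_left this h2ρ
  have hmax0 : (0:ℝ) ≤ max (siter i x) (S u) := le_trans hsit.le (le_max_left _ _)
  refine le_trans (abs_sub_le_log_mul_max hsit hSpos) ?_
  exact mul_le_mul_of_nonneg_right hL hmax0
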